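/- Let Σ be a positive-definite symmetric p×p real matrix and let r ≤ p be a natural number. Then the following are equivalent: (a) there exist a diagonal positive-definite matrix D and a positive-semidefinite matrix L with rank(L) = r such that Σ = D + L; (b) there exist a diagonal positive-definite matrix D' and a positive-semidefinite matrix L' with rank(L') = r such that Σ⁻¹ = D' − L'. -/
import Mathlib


open Matrix

private lemma isDiag_inv {p : ℕ} {D : Matrix (Fin p) (Fin p) ℝ} (hD : D.IsDiag) :
    D⁻¹.IsDiag := by
  rw [← hD.diagonal_diag, Matrix.inv_diagonal]
  exact Matrix.isDiag_diagonal _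

/-- Forward direction of Woodbury-type equivalence. -/
private lemma key_fwd {p r : ℕ} {Sig : Matrix (Fin p) (Fin p) ℝ} (hSig : Sig.PosDef)
    (h : ∃ D L : Matrix (Fin p) (Fin p) ℝ,
        D.IsDiag ∧ D.PosDef ∧ L.PosSemidef ∧ L.rank = r ∧ Sig = D + L) :
    ∃ D' L' : Matrix (Fin p) (Fin p) ℝ,
        D'.IsDiag ∧ D'.PosDef ∧ L'.PosSemidef ∧ L'.rank = r ∧ Sig⁻¹ = D' - L' := by
  obtain ⟨D, L, hDdiag, hDpd, hL, hrank, heq⟩ := h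
  have hSdet : IsUnit Sig.det := isUnit_iff_ne_zero.mpr hSig.det_pos.ne'
  have hDdet : IsUnit D.det := isUnit_iff_ne_zero.mpr hDpd.det_pos.ne'
  have hSinvdet : IsUnit (Sig⁻¹).det := isUnit_iff_ne_zero.mpr hSig.inv.det_pos.ne'
  have hDinvdet : IsUnit (D⁻¹).det := isUnit_iff_ne_zero.mpr hDpd.inv.det_pos.ne'
  refine ⟨D⁻¹, Sig⁻¹ * L * D⁻¹, isDiag_inv hDdiag, hDpd.inv, ?_, ?_, ?_⟩
  · -- positive semidefiniteness
    have h1 : (L + L * D⁻¹ * L).PosSemidef := by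
      refine hL.add ?_
      have := hDpd.inv.posSemidef.conjTranspose_mul_mul_same L
      rwa [hL.isHermitian.eq] at this
    have h2 := h1.conjTranspose_mul_mul_same Sig⁻¹
    have hSinvH : (Sig⁻¹)ᴴ = Sig⁻¹ := hSig.inv.isHermitian.eq
    rw [hSinvH] at h2
    have hid : Sig⁻¹ * (L + L * D⁻¹ * L) * Sig⁻¹ = Sig⁻¹ * L * D⁻¹ := by
      have hLD : L + L * D⁻¹ * L = L * D⁻¹ * Sig := by
        rw [heq, Matrix.mul_add, Matrix.mul_assoc L D⁻¹ D,
          Matrix.nonsing_inv_mul _ hDdet, Matrix.mul_one]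
      rw [hLD]
      simp only [Matrix.mul_assoc]
      rw [Matrix.mul_nonsing_inv _ hSdet, Matrix.mul_one]
    rwa [hid] at h2
  · -- rank
    rw [Matrix.rank_mul_eq_left_of_isUnit_det _ _ hDinvdet,
      Matrix.rank_mul_eq_right_of_isUnit_det _ _ hSinvdet, hrank]
  · -- the identity Sig⁻¹ = D⁻¹ - Sig⁻¹ L D⁻¹
    refine Matrix.inv_eq_right_inv ?_
    rw [Matrix.mul_sub, ← Matrix.mul_assoc, ← Matrix.mul_assoc,
      Matrix.mul_nonsing_inv _ hSdet, Matrix.one_mul, ← Matrix.sub_mul, heq,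
      add_sub_cancel_right, Matrix.mul_nonsing_inv _ hDdet]

/-- Backward direction. -/
private lemma key_bwd {p r : ℕ} {Sig : Matrix (Fin p) (Fin p) ℝ} (hSig : Sig.PosDef)
    (h : ∃ D' L' : Matrix (Fin p) (Fin p) ℝ,
        D'.IsDiag ∧ D'.PosDef ∧ L'.PosSemidef ∧ L'.rank = r ∧ Sig⁻¹ = D' - L') :
    ∃ D L : Matrix (Fin p) (Fin p) ℝ,
        D.IsDiag ∧ D.PosDef ∧ L.PosSemidef ∧ L.rank = r ∧ Sig = D + L := by
  obtain ⟨D', L', hDdiag, hDpd, hL, hrank, heq⟩ := h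
  have hSdet : IsUnit Sig.det := isUnit_iff_ne_zero.mpr hSig.det_pos.ne'
  have hDdet : IsUnit D'.det := isUnit_iff_ne_zero.mpr hDpd.det_pos.ne'
  have hDinvdet : IsUnit (D'⁻¹).det := isUnit_iff_ne_zero.mpr hDpd.inv.det_pos.ne'
  refine ⟨D'⁻¹, Sig * L' * D'⁻¹, isDiag_inv hDdiag, hDpd.inv, ?_, ?_, ?_⟩
  · -- positive semidefiniteness
    have h1 : (L' + L' * Sig * L').PosSemidef := by
      refine hL.add ?_
      have := hSig.posSemidef.conjTranspose_mul_mul_same L'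
      rwa [hL.isHermitian.eq] at this
    have h2 := h1.conjTranspose_mul_mul_same D'⁻¹
    have hDinvH : (D'⁻¹)ᴴ = D'⁻¹ := hDpd.inv.isHermitian.eq
    rw [hDinvH] at h2
    have hid : D'⁻¹ * (L' + L' * Sig * L') * D'⁻¹ = Sig * L' * D'⁻¹ := by
      have hLD : L' + L' * Sig * L' = D' * (Sig * L') := by
        have hD'eq : D' = Sig⁻¹ + L' := by rw [heq]; abel
        rw [hD'eq, Matrix.add_mul, ← Matrix.mul_assoc,
          Matrix.nonsing_inv_mul _ hSdet, Matrix.one_mul, Matrix.mul_assoc]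
      rw [hLD, ← Matrix.mul_assoc, ← Matrix.mul_assoc,
        Matrix.nonsing_inv_mul _ hDdet, Matrix.one_mul]
    rwa [hid] at h2
  · -- rank
    rw [Matrix.rank_mul_eq_left_of_isUnit_det _ _ hDinvdet,
      Matrix.rank_mul_eq_right_of_isUnit_det _ _ hSdet, hrank]
  · -- Sig = D'⁻¹ + Sig * L' * D'⁻¹
    have hSinv : Sig⁻¹ * (D'⁻¹ + Sig * L' * D'⁻¹) = 1 := by
      rw [Matrix.mul_add, ← Matrix.mul_assoc, ← Matrix.mul_assoc,
        Matrix.nonsing_inv_mul _ hSdet, Matrix.one_mul, ← Matrix.add_mul]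
      have : Sig⁻¹ + L' = D' := by rw [heq]; abel
      rw [this, Matrix.mul_nonsing_inv _ hDdet]
    have := Matrix.inv_eq_right_inv hSinv
    rwa [Matrix.nonsing_inv_nonsing_inv _ hSdet] at this

/-- A positive-definite matrix `Sig` decomposes as a diagonal positive-definite
matrix plus a rank-`r` positive-semidefinite matrix if and only if its inverse decomposes as a
diagonal positive-definite matrix minus a rank-`r` positive-semidefinite matrix. -/
theorem stmt_2 (p r : ℕ) (hr : r ≤ p)
    (Sig : Matrix (Fin p) (Fin p) ℝ) (hSig : Sig.PosDef) :
    (∃ D L : Matrix (Fin p) (Fin p) ℝ,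
        D.IsDiag ∧ D.PosDef ∧ L.PosSemidef ∧ L.rank = r ∧ Sig = D + L) ↔
    (∃ D' L' : Matrix (Fin p) (Fin p) ℝ,
        D'.IsDiag ∧ D'.PosDef ∧ L'.PosSemidef ∧ L'.rank = r ∧ Sig⁻¹ = D' - L') := by
  exact ⟨key_fwd hSig, key_bwd hSig⟩
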